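/- For n ≥ 1, the signed count of overpartitions π of n, weighted by (-1)^{ℓ_{N<O}(π)}, equals twice the number of partitions of n with an even number of parts, where ℓ_{N<O}(π) is the number of non-overlined parts of π of size strictly less than the largest overlined part (counting all non-overlined parts if there is no overlined part, i.e. treating the largest overlined size as +∞). -/

import Mathlib

open scoped Classical

/-- An overpartition of `n`: a finite set of overlined part sizes (the first
occurrence of a size may be overlined, so overlined parts are distinct)
together with a multiset of non-overlined parts, all parts positive,
with total sum `n`. -/
structure Overpartition (n : ℕ) where
  overl : Finset ℕ
  plain : Multiset ℕ
  over_pos : ∀ x ∈ overl, 0 < x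
  plain_pos : ∀ x ∈ plain, 0 < x
  sum_eq : (∑ x ∈ overl, x) + plain.sum = n
/-- Number of non-overlined parts of size strictly less than the largest
overlined part; all non-overlined parts count if there is no overlined part. -/
noncomputable def lNltO {n : ℕ} (π : Overpartition n) : ℕ :=
  if π.overl = ∅ then Multiset.card π.plain
  else Multiset.card (π.plain.filter (fun x => ∃ y ∈ π.overl, x < y))

namespace OPaux

variable {n : ℕ}

theorem op_ext {π σ : Overpartition n} (h1 : π.overl = σ.overl) (h2 : π.plain = σ.plain) :
    π = σ := by
  cases π; cases σ; simp_all

/-- minimum element of a nonzero multiset of naturals (0 for the empty multiset) -/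
noncomputable def jmin (s : Multiset ℕ) : ℕ :=
  if h : s = 0 then 0 else
    s.toFinset.min' (by
      obtain ⟨x, hx⟩ := Multiset.exists_mem_of_ne_zero h
      exact ⟨x, Multiset.mem_toFinset.mpr hx⟩)

theorem jmin_mem {s : Multiset ℕ} (h : s ≠ 0) : jmin s ∈ s := by
  rw [jmin, dif_neg h]
  exact Multiset.mem_toFinset.mp (Finset.min'_mem _ _)

theorem jmin_le {s : Multiset ℕ} {x : ℕ} (hx : x ∈ s) : jmin s ≤ x := by
  have h : s ≠ 0 := by rintro rfl; simp at hx
  rw [jmin, dif_neg h]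
  exact Finset.min'_le _ _ (Multiset.mem_toFinset.mpr hx)

theorem jmin_eq {s : Multiset ℕ} {x : ℕ} (hx : x ∈ s) (hle : ∀ y ∈ s, x ≤ y) :
    jmin s = x :=
  le_antisymm (jmin_le hx) (hle _ (jmin_mem (by rintro rfl; simp at hx)))

/-- the largest overlined part (0 if there is none) -/
noncomputable def mx (π : Overpartition n) : ℕ := π.overl.sup id

theorem sup_eq {s : Finset ℕ} {m : ℕ} (hm : m ∈ s) (hle : ∀ x ∈ s, x ≤ m) :
    s.sup id = m :=
  le_antisymm (Finset.sup_le hle) (Finset.le_sup (f := id) hm)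

theorem mx_mem {π : Overpartition n} (h : π.overl.Nonempty) : mx π ∈ π.overl := by
  have : π.overl.max' h = π.overl.sup id := by
    rw [Finset.max', Finset.sup'_eq_sup]
  rw [mx, ← this]
  exact Finset.max'_mem _ _

theorem le_mx {π : Overpartition n} {x : ℕ} (hx : x ∈ π.overl) : x ≤ mx π :=
  Finset.le_sup (f := id) hx

theorem val_sum (s : Finset ℕ) : s.val.sum = ∑ x ∈ s, x := Finset.sum_val s

/-- the multiset of parts below the largest overlined part -/
noncomputable def small (π : Overpartition n) : Multiset ℕ :=
  (π.overl.erase (mx π)).val + π.plain.filter (fun x => x < mx π)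

theorem small_facts {π : Overpartition n} (h : π.overl.Nonempty) (hS : small π = 0) :
    π.overl = {mx π} ∧ ∀ x ∈ π.plain, mx π ≤ x := by
  rw [small, add_eq_zero] at hS
  obtain ⟨h1, h2⟩ := hS
  constructor
  · have := (Finset.erase_eq_empty_iff _ _).mp (Finset.val_eq_zero.mp h1)
    rcases this with h' | h'
    · exact absurd h' (Finset.nonempty_iff_ne_empty.mp h)
    · exact h'
  · intro x hx
    by_contra hlt
    have : x ∈ π.plain.filter (fun x => x < mx π) :=
      Multiset.mem_filter.mpr ⟨hx, lt_of_not_ge hlt⟩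
    rw [h2] at this; simp at this

theorem lNltO_of_empty {π : Overpartition n} (h : π.overl = ∅) :
    lNltO π = Multiset.card π.plain := if_pos h

theorem lNltO_of_nonempty {π : Overpartition n} (h : π.overl.Nonempty) :
    lNltO π = Multiset.card (π.plain.filter (fun x => x < mx π)) := by
  rw [lNltO, if_neg (Finset.nonempty_iff_ne_empty.mp h)]
  congr 1
  apply Multiset.filter_congr
  intro x _
  constructor
  · rintro ⟨y, hy, hxy⟩; exact lt_of_lt_of_le hxy (le_mx hy)
  · intro hx; exact ⟨mx π, mx_mem h, hx⟩

end OPaux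

namespace OPaux

variable {n : ℕ}

/-- the sign-reversing involution -/
noncomputable def phi (π : Overpartition n) : Overpartition n :=
  if h : π.overl.Nonempty then
    if hS : small π = 0 then
      if he : Even (Multiset.card π.plain) then
        { overl := ∅
          plain := mx π ::ₘ π.plain
          over_pos := by simp
          plain_pos := by
            intro x hx
            rcases Multiset.mem_cons.mp hx with rfl | hx
            · exact π.over_pos _ (mx_mem h)
            · exact π.plain_pos _ hx
          sum_eq := by
            have h1 := π.sum_eq
            rw [(small_facts h hS).1, Finset.sum_singleton] at h1
            simpa using h1 }
      else π
    else
      if hj : jmin (small π) ∈ π.overl then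
        { overl := π.overl.erase (jmin (small π))
          plain := jmin (small π) ::ₘ π.plain
          over_pos := fun x hx => π.over_pos _ (Finset.mem_of_mem_erase hx)
          plain_pos := by
            intro x hx
            rcases Multiset.mem_cons.mp hx with rfl | hx
            · exact π.over_pos _ hj
            · exact π.plain_pos _ hx
          sum_eq := by
            have h1 := π.sum_eq
            have h2 := Finset.add_sum_erase π.overl id hj
            simp only [Multiset.sum_cons, id] at h2 ⊢
            omega }
      else
        { overl := insert (jmin (small π)) π.overl
          plain := π.plain.erase (jmin (small π))
          over_pos := by
            intro x hx
            rcases Finset.mem_insert.mp hx with rfl | hx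
            · have hj2 : jmin (small π) ∈ small π := jmin_mem hS
              rw [small] at hj2
              rcases Multiset.mem_add.mp hj2 with h' | h'
              · exact π.over_pos _ (Finset.mem_of_mem_erase h')
              · exact π.plain_pos _ (Multiset.mem_filter.mp h').1
            · exact π.over_pos _ hx
          plain_pos := fun x hx => π.plain_pos _ (Multiset.mem_of_mem_erase hx)
          sum_eq := by
            have hjp : jmin (small π) ∈ π.plain := by
              have hj2 : jmin (small π) ∈ small π := jmin_mem hS
              rw [small] at hj2
              rcases Multiset.mem_add.mp hj2 with h' | h'
              · exact absurd (Finset.mem_of_mem_erase h') hj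
              · exact (Multiset.mem_filter.mp h').1
            have h1 := π.sum_eq
            have h2 : jmin (small π) ::ₘ π.plain.erase (jmin (small π)) = π.plain :=
              Multiset.cons_erase hjp
            have h3 := congrArg Multiset.sum h2
            rw [Multiset.sum_cons] at h3
            rw [Finset.sum_insert hj]
            omega }
  else
    if he : Even (Multiset.card π.plain) then π
    else
      { overl := {jmin π.plain}
        plain := π.plain.erase (jmin π.plain)
        over_pos := by
          intro x hx
          rw [Finset.mem_singleton] at hx
          subst hx
          refine π.plain_pos _ (jmin_mem ?_)
          rintro h0
          rw [h0] at he; simp at he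
        plain_pos := fun x hx => π.plain_pos _ (Multiset.mem_of_mem_erase hx)
        sum_eq := by
          have hne : π.plain ≠ 0 := by rintro h0; rw [h0] at he; simp at he
          have h1 := π.sum_eq
          rw [Finset.not_nonempty_iff_eq_empty.mp h] at h1
          simp only [Finset.sum_empty, zero_add] at h1
          have h3 := congrArg Multiset.sum (Multiset.cons_erase (jmin_mem hne))
          rw [Multiset.sum_cons] at h3
          rw [Finset.sum_singleton]
          omega }

theorem phi_empty_even {π : Overpartition n} (h : π.overl = ∅)
    (he : Even (Multiset.card π.plain)) : phi π = π := by
  rw [phi, dif_neg (by simp [h]), dif_pos he]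

theorem phi_empty_odd {π : Overpartition n} (h : π.overl = ∅)
    (he : ¬ Even (Multiset.card π.plain)) :
    (phi π).overl = {jmin π.plain} ∧ (phi π).plain = π.plain.erase (jmin π.plain) := by
  rw [phi, dif_neg (by simp [h]), dif_neg he]
  exact ⟨rfl, rfl⟩

theorem phi_zero_even {π : Overpartition n} (h : π.overl.Nonempty) (hS : small π = 0)
    (he : Even (Multiset.card π.plain)) :
    (phi π).overl = ∅ ∧ (phi π).plain = mx π ::ₘ π.plain := by
  rw [phi, dif_pos h, dif_pos hS, dif_pos he]
  exact ⟨rfl, rfl⟩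

theorem phi_zero_odd {π : Overpartition n} (h : π.overl.Nonempty) (hS : small π = 0)
    (he : ¬ Even (Multiset.card π.plain)) : phi π = π := by
  rw [phi, dif_pos h, dif_pos hS, dif_neg he]

theorem phi_unover {π : Overpartition n} (h : π.overl.Nonempty) (hS : small π ≠ 0)
    (hj : jmin (small π) ∈ π.overl) :
    (phi π).overl = π.overl.erase (jmin (small π)) ∧
      (phi π).plain = jmin (small π) ::ₘ π.plain := by
  rw [phi, dif_pos h, dif_neg hS, dif_pos hj]
  exact ⟨rfl, rfl⟩

theorem phi_over {π : Overpartition n} (h : π.overl.Nonempty) (hS : small π ≠ 0)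
    (hj : jmin (small π) ∉ π.overl) :
    (phi π).overl = insert (jmin (small π)) π.overl ∧
      (phi π).plain = π.plain.erase (jmin (small π)) := by
  rw [phi, dif_pos h, dif_neg hS, dif_neg hj]
  exact ⟨rfl, rfl⟩

end OPaux

namespace OPaux

variable {n : ℕ}

theorem cons_add_comm (a : ℕ) (s t : Multiset ℕ) : s + (a ::ₘ t) = a ::ₘ (s + t) := by
  rw [add_comm s, Multiset.cons_add, add_comm t s]

/-- the fixed points of the involution -/
def IsFix (π : Overpartition n) : Prop :=
  (π.overl = ∅ ∧ Even (Multiset.card π.plain)) ∨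
  (π.overl.Nonempty ∧ small π = 0 ∧ ¬ Even (Multiset.card π.plain))

theorem fix_phi {π : Overpartition n} (hf : IsFix π) : phi π = π := by
  rcases hf with ⟨h1, h2⟩ | ⟨h1, h2, h3⟩
  · exact phi_empty_even h1 h2
  · exact phi_zero_odd h1 h2 h3

theorem fix_even {π : Overpartition n} (hf : IsFix π) : Even (lNltO π) := by
  rcases hf with ⟨h1, h2⟩ | ⟨h1, h2, h3⟩
  · rwa [lNltO_of_empty h1]
  · rw [lNltO_of_nonempty h1]
    have := (small_facts h1 h2).2
    have hfil : π.plain.filter (fun x => x < mx π) = 0 :=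
      Multiset.filter_eq_nil.mpr (fun x hx => not_lt.mpr (this x hx))
    rw [hfil]
    simp

theorem moving {π : Overpartition n} (hf : ¬ IsFix π) :
    (Even (lNltO (phi π)) ↔ Odd (lNltO π)) ∧ ¬ IsFix (phi π) ∧ phi (phi π) = π := by
  by_cases h : π.overl.Nonempty
  · by_cases hS : small π = 0
    · by_cases he : Even (Multiset.card π.plain)
      · -- case "O = {m}, all plain ≥ m, even number of plain parts": move m to plain
        obtain ⟨hO', hP'⟩ := phi_zero_even h hS he
        obtain ⟨hO, hP⟩ := small_facts h hS
        have hfil : π.plain.filter (fun x => x < mx π) = 0 :=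
          Multiset.filter_eq_nil.mpr (fun x hx => not_lt.mpr (hP x hx))
        have l1 : lNltO (phi π) = Multiset.card π.plain + 1 := by
          rw [lNltO_of_empty hO', hP', Multiset.card_cons]
        have l2 : lNltO π = 0 := by
          rw [lNltO_of_nonempty h, hfil, Multiset.card_zero]
        obtain ⟨k, hk⟩ := he
        have heven' : ¬ Even (Multiset.card (phi π).plain) := by
          rw [hP', Multiset.card_cons]
          simp only [Nat.even_iff]
          omega
        refine ⟨?_, ?_, ?_⟩
        · rw [l1, l2]
          simp only [Nat.even_iff, Nat.odd_iff]
          omega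
        · rintro (⟨_, h2⟩ | ⟨h1, _, _⟩)
          · exact heven' h2
          · rw [hO'] at h1; simp at h1
        · have hne0 : (phi π).plain ≠ 0 := by rw [hP']; simp
          obtain ⟨hO'', hP''⟩ := phi_empty_odd hO' heven'
          have hj : jmin ((phi π).plain) = mx π := by
            rw [hP']
            refine jmin_eq (Multiset.mem_cons_self _ _) ?_
            intro y hy
            rcases Multiset.mem_cons.mp hy with rfl | hy
            · exact le_rfl
            · exact hP y hy
          apply op_ext
          · rw [hO'', hj, hO]
          · rw [hP'', hj, hP', Multiset.erase_cons_head]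
      · exact absurd (Or.inr ⟨h, hS, he⟩) hf
    · -- O nonempty and there are parts below max O: toggle the smallest such part
      obtain ⟨j, hjdef⟩ : ∃ j, j = jmin (small π) := ⟨_, rfl⟩
      have hjS : j ∈ small π := hjdef ▸ jmin_mem hS
      have hjlt : j < mx π := by
        rw [small] at hjS
        rcases Multiset.mem_add.mp hjS with h' | h'
        · obtain ⟨hne, hmem⟩ := Finset.mem_erase.mp (Finset.mem_val.mp h')
          exact lt_of_le_of_ne (le_mx hmem) hne
        · exact (Multiset.mem_filter.mp h').2
      by_cases hj : j ∈ π.overl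
      · -- un-overline j
        obtain ⟨hO', hP'⟩ := phi_unover h hS (hjdef ▸ hj)
        rw [← hjdef] at hO' hP'
        have hjA : j ∈ (π.overl.erase (mx π)).val :=
          Finset.mem_val.mpr (Finset.mem_erase.mpr ⟨ne_of_lt hjlt, hj⟩)
        have hm_mem : mx π ∈ π.overl.erase j :=
          Finset.mem_erase.mpr ⟨(ne_of_gt hjlt), mx_mem h⟩
        have hne' : (phi π).overl.Nonempty := by rw [hO']; exact ⟨_, hm_mem⟩
        have hmx' : mx (phi π) = mx π := by
          rw [mx, hO']
          exact sup_eq hm_mem (fun x hx => le_mx (Finset.mem_of_mem_erase hx))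
        have hsmall' : small (phi π) = small π := by
          rw [small, hmx', hO', hP', Finset.erase_right_comm, Finset.erase_val,
            Multiset.filter_cons_of_pos (p := fun x => x < mx π) _ hjlt, cons_add_comm, small,
            ← Multiset.cons_add, Multiset.cons_erase hjA]
        have hS' : small (phi π) ≠ 0 := by rw [hsmall']; exact hS
        have hj' : jmin (small (phi π)) = j := by rw [hsmall', ← hjdef]
        have l1 : lNltO (phi π) = lNltO π + 1 := by
          rw [lNltO_of_nonempty hne', lNltO_of_nonempty h, hmx', hP',
            Multiset.filter_cons_of_pos (p := fun x => x < mx π) _ hjlt, Multiset.card_cons]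
        refine ⟨?_, ?_, ?_⟩
        · rw [l1]
          simp only [Nat.even_iff, Nat.odd_iff]
          omega
        · rintro (⟨h1, _⟩ | ⟨_, h2, _⟩)
          · rw [h1] at hne'; simp at hne'
          · exact hS' h2
        · have hjo' : jmin (small (phi π)) ∉ (phi π).overl := by
            rw [hj', hO']; exact Finset.notMem_erase _ _
          obtain ⟨hO'', hP''⟩ := phi_over hne' hS' hjo'
          rw [hj'] at hO'' hP''
          apply op_ext
          · rw [hO'', hO', Finset.insert_erase hj]
          · rw [hP'', hP', Multiset.erase_cons_head]
      · -- overline j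
        have hjp : j ∈ π.plain := by
          rw [small] at hjS
          rcases Multiset.mem_add.mp hjS with h' | h'
          · exact absurd (Finset.mem_of_mem_erase (Finset.mem_val.mp h')) hj
          · exact (Multiset.mem_filter.mp h').1
        obtain ⟨hO', hP'⟩ := phi_over h hS (hjdef ▸ hj)
        rw [← hjdef] at hO' hP'
        have hne' : (phi π).overl.Nonempty := by rw [hO']; exact Finset.insert_nonempty _ _
        have hmx' : mx (phi π) = mx π := by
          rw [mx, hO']
          refine sup_eq (Finset.mem_insert_of_mem (mx_mem h)) ?_
          intro x hx
          rcases Finset.mem_insert.mp hx with rfl | hx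
          · exact le_of_lt hjlt
          · exact le_mx hx
        have hsmall' : small (phi π) = small π := by
          rw [small, hmx', hO', hP', Finset.erase_insert_of_ne (ne_of_lt hjlt),
            Finset.insert_val_of_notMem (fun hc => hj (Finset.mem_of_mem_erase hc)),
            Multiset.cons_add, small, ← cons_add_comm,
            ← Multiset.filter_cons_of_pos (p := fun x => x < mx π) _ hjlt,
            Multiset.cons_erase hjp]
        have hS' : small (phi π) ≠ 0 := by rw [hsmall']; exact hS
        have hj' : jmin (small (phi π)) = j := by rw [hsmall', ← hjdef]
        have l1 : lNltO π = lNltO (phi π) + 1 := by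
          rw [lNltO_of_nonempty h, lNltO_of_nonempty hne', hmx', hP']
          conv_lhs => rw [← Multiset.cons_erase hjp,
            Multiset.filter_cons_of_pos (p := fun x => x < mx π) _ hjlt, Multiset.card_cons]
        refine ⟨?_, ?_, ?_⟩
        · rw [l1]
          simp only [Nat.even_iff, Nat.odd_iff]
          omega
        · rintro (⟨h1, _⟩ | ⟨_, h2, _⟩)
          · rw [h1] at hne'; simp at hne'
          · exact hS' h2
        · have hjo' : jmin (small (phi π)) ∈ (phi π).overl := by
            rw [hj', hO']; exact Finset.mem_insert_self _ _
          obtain ⟨hO'', hP''⟩ := phi_unover hne' hS' hjo'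
          rw [hj'] at hO'' hP''
          apply op_ext
          · rw [hO'', hO', Finset.erase_insert hj]
          · rw [hP'', hP', Multiset.cons_erase hjp]
  · -- O empty: overline the smallest plain part (if odd number of parts)
    have hO : π.overl = ∅ := Finset.not_nonempty_iff_eq_empty.mp h
    by_cases he : Even (Multiset.card π.plain)
    · exact absurd (Or.inl ⟨hO, he⟩) hf
    · obtain ⟨hO', hP'⟩ := phi_empty_odd hO he
      have hne0 : π.plain ≠ 0 := fun h0 => he (by rw [h0]; simp)
      have hjm : jmin π.plain ∈ π.plain := jmin_mem hne0
      have hne' : (phi π).overl.Nonempty := by rw [hO']; simp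
      have hmx' : mx (phi π) = jmin π.plain := by
        rw [mx, hO']
        exact sup_eq (Finset.mem_singleton_self _) (by simp)
      have hfil : (phi π).plain.filter (fun x => x < mx (phi π)) = 0 := by
        refine Multiset.filter_eq_nil.mpr (fun x hx => ?_)
        rw [hmx']
        exact not_lt.mpr (jmin_le (Multiset.mem_of_mem_erase (hP' ▸ hx)))
      have hcard' : Multiset.card (phi π).plain = Multiset.card π.plain - 1 := by
        rw [hP', Multiset.card_erase_of_mem hjm]
        rfl
      have heven' : Even (Multiset.card (phi π).plain) := by
        have h1 : Multiset.card π.plain ≠ 0 := by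
          simpa using fun hc => hne0 (Multiset.card_eq_zero.mp hc)
        rw [hcard', Nat.even_iff]
        rw [Nat.even_iff] at he
        omega
      have l1 : lNltO (phi π) = 0 := by
        rw [lNltO_of_nonempty hne', hfil, Multiset.card_zero]
      refine ⟨?_, ?_, ?_⟩
      · rw [l1, lNltO_of_empty hO, Nat.even_iff, Nat.odd_iff]
        rw [Nat.even_iff] at he
        omega
      · rintro (⟨h1, _⟩ | ⟨_, _, h3⟩)
        · rw [h1] at hne'; simp at hne'
        · exact h3 heven'
      · have hs0 : small (phi π) = 0 := by
          rw [small, hfil, hO', hmx', Finset.erase_singleton]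
          simp
        obtain ⟨hO'', hP''⟩ := phi_zero_even hne' hs0 heven'
        apply op_ext
        · rw [hO'', hO]
        · rw [hP'', hmx', hP', Multiset.cons_erase hjm]

end OPaux

namespace OPaux

variable {n : ℕ}

theorem multiset_finite (n : ℕ) :
    {m : Multiset ℕ | m.sum ≤ n ∧ ∀ x ∈ m, 0 < x}.Finite := by
  have h : {m : Multiset ℕ | m.sum ≤ n ∧ ∀ x ∈ m, 0 < x} ⊆
      ⋃ k ∈ Set.Iic n, Set.range (fun p : Nat.Partition k => p.parts) := by
    rintro m ⟨h1, h2⟩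
    refine Set.mem_biUnion (Set.mem_Iic.mpr h1) ?_
    exact ⟨⟨m, fun hi => h2 _ hi, rfl⟩, rfl⟩
  exact Set.Finite.subset
    (Set.Finite.biUnion (Set.finite_Iic n) (fun k _ => Set.finite_range _)) h

instance : Finite (Overpartition n) := by
  set S := {m : Multiset ℕ | m.sum ≤ n ∧ ∀ x ∈ m, 0 < x} with hSdef
  have hT : (S ×ˢ S).Finite := (multiset_finite n).prod (multiset_finite n)
  haveI := hT.to_subtype
  refine Finite.of_injective (fun π : Overpartition n =>
    (⟨(π.overl.val, π.plain), ?_, ?_⟩ : ↥(S ×ˢ S))) ?_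
  · constructor
    · rw [val_sum]
      have := π.sum_eq
      omega
    · exact fun x hx => π.over_pos _ (Finset.mem_val.mp hx)
  · constructor
    · show π.plain.sum ≤ n
      have := π.sum_eq
      omega
    · exact π.plain_pos
  · intro π σ hps
    have h1 : (π.overl.val, π.plain) = (σ.overl.val, σ.plain) := congrArg Subtype.val hps
    rw [Prod.mk.injEq] at h1
    exact op_ext (Finset.val_injective h1.1) h1.2

theorem count_aux {α : Type*} [Finite α] (g : α → ℕ) (f : α → α) (Fix : α → Prop)
    (h1 : ∀ a, Fix a → f a = a)
    (h2 : ∀ a, ¬ Fix a → (Even (g (f a)) ↔ Odd (g a)))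
    (h3 : ∀ a, ¬ Fix a → ¬ Fix (f a))
    (h4 : ∀ a, ¬ Fix a → f (f a) = a)
    (h5 : ∀ a, Fix a → Even (g a)) :
    (Nat.card {a // Even (g a)} : ℤ) - Nat.card {a // Odd (g a)} =
      Nat.card {a // Fix a} := by
  classical
  haveI : Fintype α := Fintype.ofFinite α
  have cE : (Nat.card {a // Even (g a)} : ℤ) =
      ((Finset.univ.filter (fun a => Even (g a))).card : ℤ) := by
    rw [Nat.card_eq_fintype_card, Fintype.card_subtype]
  have cO : (Nat.card {a // Odd (g a)} : ℤ) =
      ((Finset.univ.filter (fun a => Odd (g a))).card : ℤ) := by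
    rw [Nat.card_eq_fintype_card, Fintype.card_subtype]
  have cF : (Nat.card {a // Fix a} : ℤ) =
      ((Finset.univ.filter Fix).card : ℤ) := by
    rw [Nat.card_eq_fintype_card, Fintype.card_subtype]
  rw [cE, cO, cF]
  have key1 : ∑ a : α, ((-1 : ℤ) ^ (g a)) =
      ((Finset.univ.filter (fun a => Even (g a))).card : ℤ) -
        ((Finset.univ.filter (fun a => Odd (g a))).card : ℤ) := by
    rw [← Finset.sum_filter_add_sum_filter_not Finset.univ (fun a => Even (g a))]
    have e1 : ∑ a ∈ Finset.univ.filter (fun a => Even (g a)), ((-1 : ℤ) ^ (g a)) =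
        ((Finset.univ.filter (fun a => Even (g a))).card : ℤ) := by
      rw [Finset.sum_congr rfl (fun a ha => (Finset.mem_filter.mp ha).2.neg_one_pow)]
      simp
    have e2 : ∑ a ∈ Finset.univ.filter (fun a => ¬ Even (g a)), ((-1 : ℤ) ^ (g a)) =
        -((Finset.univ.filter (fun a => Odd (g a))).card : ℤ) := by
      have hfe : Finset.univ.filter (fun a => ¬ Even (g a)) =
          Finset.univ.filter (fun a => Odd (g a)) := by
        apply Finset.filter_congr
        intro a _
        simp [Nat.not_even_iff_odd]
      rw [hfe, Finset.sum_congr rfl (fun a ha => (Finset.mem_filter.mp ha).2.neg_one_pow)]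
      simp
    rw [e1, e2]
    ring
  have key2 : ∑ a : α, ((-1 : ℤ) ^ (g a)) = ((Finset.univ.filter Fix).card : ℤ) := by
    rw [← Finset.sum_filter_add_sum_filter_not Finset.univ Fix]
    have e1 : ∑ a ∈ Finset.univ.filter Fix, ((-1 : ℤ) ^ (g a)) =
        ((Finset.univ.filter Fix).card : ℤ) := by
      rw [Finset.sum_congr rfl
        (fun a ha => (h5 a (Finset.mem_filter.mp ha).2).neg_one_pow)]
      simp
    have e2 : ∑ a ∈ Finset.univ.filter (fun a => ¬ Fix a), ((-1 : ℤ) ^ (g a)) = 0 := by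
      refine Finset.sum_involution (fun a _ => f a) ?_ ?_ ?_ ?_
      · intro a ha
        have hna : ¬ Fix a := (Finset.mem_filter.mp ha).2
        rcases Nat.even_or_odd (g a) with hev | hod
        · have : Odd (g (f a)) := by
            rw [← Nat.not_even_iff_odd]
            intro hc
            exact (Nat.not_odd_iff_even.mpr hev) ((h2 a hna).mp hc)
          rw [hev.neg_one_pow, this.neg_one_pow]
          ring
        · have : Even (g (f a)) := (h2 a hna).mpr hod
          rw [this.neg_one_pow, hod.neg_one_pow]
          ring
      · intro a ha _
        have hna : ¬ Fix a := (Finset.mem_filter.mp ha).2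
        intro hc
        have hc' : f a = a := hc
        rcases Nat.even_or_odd (g a) with hev | hod
        · have : Odd (g (f a)) := by
            rw [Nat.not_even_iff_odd.symm]
            intro hcc
            exact (Nat.not_odd_iff_even.mpr hev) ((h2 a hna).mp hcc)
          rw [hc'] at this
          exact (Nat.not_odd_iff_even.mpr hev) this
        · have : Even (g (f a)) := (h2 a hna).mpr hod
          rw [hc'] at this
          exact (Nat.not_odd_iff_even.mpr this) hod
      · intro a ha
        exact Finset.mem_filter.mpr ⟨Finset.mem_univ _, h3 a (Finset.mem_filter.mp ha).2⟩
      · intro a ha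
        exact h4 a (Finset.mem_filter.mp ha).2
    rw [e1, e2, add_zero]
  rw [← key1, key2]

end OPaux

namespace OPaux

variable {n : ℕ}

noncomputable def fix1 (p : n.Partition) : Overpartition n where
  overl := ∅
  plain := p.parts
  over_pos := by simp
  plain_pos := fun x hx => p.parts_pos hx
  sum_eq := by simp [p.parts_sum]

noncomputable def fix2 (p : n.Partition) (hp : p.parts ≠ 0) : Overpartition n where
  overl := {jmin p.parts}
  plain := p.parts.erase (jmin p.parts)
  over_pos := by
    intro x hx
    rw [Finset.mem_singleton] at hx
    subst hx
    exact p.parts_pos (jmin_mem hp)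
  plain_pos := fun x hx => p.parts_pos (Multiset.mem_of_mem_erase hx)
  sum_eq := by
    rw [Finset.sum_singleton]
    have h3 := congrArg Multiset.sum (Multiset.cons_erase (jmin_mem hp))
    rw [Multiset.sum_cons] at h3
    rw [h3, p.parts_sum]

theorem mx_fix2 (p : n.Partition) (hp : p.parts ≠ 0) :
    mx (fix2 p hp) = jmin p.parts := by
  rw [mx, fix2]
  exact sup_eq (Finset.mem_singleton_self _) (by simp)

theorem fix2_isfix (p : n.Partition) (hp : p.parts ≠ 0)
    (he : Even (Multiset.card p.parts)) : IsFix (fix2 p hp) := by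
  refine Or.inr ⟨?_, ?_, ?_⟩
  · exact Finset.singleton_nonempty _
  · rw [small, mx_fix2]
    have h1 : (fix2 p hp).overl = {jmin p.parts} := rfl
    have h2 : (fix2 p hp).plain = p.parts.erase (jmin p.parts) := rfl
    rw [h1, h2, Finset.erase_singleton]
    have hfil : (p.parts.erase (jmin p.parts)).filter (fun x => x < jmin p.parts) = 0 :=
      Multiset.filter_eq_nil.mpr
        (fun x hx => not_lt.mpr (jmin_le (Multiset.mem_of_mem_erase hx)))
    rw [hfil]
    simp
  · have h2 : (fix2 p hp).plain = p.parts.erase (jmin p.parts) := rfl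
    rw [h2, Multiset.card_erase_of_mem (jmin_mem hp)]
    have hcpos : 0 < Multiset.card p.parts := Multiset.card_pos.mpr hp
    rw [Nat.even_iff] at he ⊢
    simp only [Nat.pred_eq_sub_one]
    omega

theorem final_count (hn : 1 ≤ n) :
    Nat.card {π : Overpartition n // IsFix π} =
      2 * Nat.card {p : n.Partition // Even (Multiset.card p.parts)} := by
  classical
  have hparts_ne : ∀ p : n.Partition, p.parts ≠ 0 := by
    intro p h0
    have := p.parts_sum
    rw [h0] at this
    simp at this
    omega
  let B : Bool × {p : n.Partition // Even (Multiset.card p.parts)} →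
      {π : Overpartition n // IsFix π} := fun x =>
    match x with
    | (false, p) => ⟨fix1 p.1, Or.inl ⟨rfl, p.2⟩⟩
    | (true, p) => ⟨fix2 p.1 (hparts_ne p.1), fix2_isfix p.1 (hparts_ne p.1) p.2⟩
  have hinj : Function.Injective B := by
    rintro ⟨b1, p1⟩ ⟨b2, p2⟩ hB
    have hval := congrArg Subtype.val hB
    cases b1 <;> cases b2
    · simp only [B] at hval
      have hplain : (fix1 p1.1).plain = (fix1 p2.1).plain := by rw [hval]
      have : p1.1.parts = p2.1.parts := hplain
      rw [Prod.mk.injEq]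
      exact ⟨rfl, Subtype.ext (Nat.Partition.ext this)⟩
    · simp only [B] at hval
      have hover : (fix1 p1.1).overl = (fix2 p2.1 (hparts_ne p2.1)).overl := by rw [hval]
      have : (∅ : Finset ℕ) = {jmin p2.1.parts} := hover
      exact absurd this.symm (Finset.singleton_ne_empty _)
    · simp only [B] at hval
      have hover : (fix2 p1.1 (hparts_ne p1.1)).overl = (fix1 p2.1).overl := by rw [hval]
      have : ({jmin p1.1.parts} : Finset ℕ) = ∅ := hover
      exact absurd this (Finset.singleton_ne_empty _)
    · simp only [B] at hval
      have hover : (fix2 p1.1 (hparts_ne p1.1)).overl = (fix2 p2.1 (hparts_ne p2.1)).overl := by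
        rw [hval]
      have hj : jmin p1.1.parts = jmin p2.1.parts := by
        have : ({jmin p1.1.parts} : Finset ℕ) = {jmin p2.1.parts} := hover
        exact Finset.singleton_injective this
      have hplain : (fix2 p1.1 (hparts_ne p1.1)).plain = (fix2 p2.1 (hparts_ne p2.1)).plain := by
        rw [hval]
      have herase : p1.1.parts.erase (jmin p1.1.parts) = p2.1.parts.erase (jmin p2.1.parts) :=
        hplain
      have : p1.1.parts = p2.1.parts := by
        rw [← Multiset.cons_erase (jmin_mem (hparts_ne p1.1)), herase, hj,
          Multiset.cons_erase (jmin_mem (hparts_ne p2.1))]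
      rw [Prod.mk.injEq]
      exact ⟨rfl, Subtype.ext (Nat.Partition.ext this)⟩
  have hsurj : Function.Surjective B := by
    rintro ⟨π, hfix⟩
    rcases hfix with ⟨hO, he⟩ | ⟨hne, hS, ho⟩
    · refine ⟨(false, ⟨⟨π.plain, fun hx => π.plain_pos _ hx, ?_⟩, he⟩), ?_⟩
      · have := π.sum_eq
        rw [hO] at this
        simpa using this
      · refine Subtype.ext (op_ext ?_ ?_)
        · exact hO.symm
        · rfl
    · obtain ⟨hO, hP⟩ := small_facts hne hS
      have hmpos : 0 < mx π := π.over_pos _ (mx_mem hne)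
      have hqsum : (mx π ::ₘ π.plain).sum = n := by
        have := π.sum_eq
        rw [hO, Finset.sum_singleton] at this
        rw [Multiset.sum_cons]
        omega
      have hqpos : ∀ {i : ℕ}, i ∈ (mx π ::ₘ π.plain) → 0 < i := by
        intro i hi
        rcases Multiset.mem_cons.mp hi with rfl | hi
        · exact hmpos
        · exact π.plain_pos _ hi
      set q : n.Partition := ⟨mx π ::ₘ π.plain, hqpos, hqsum⟩ with hqdef
      have hqe : Even (Multiset.card q.parts) := by
        have : q.parts = mx π ::ₘ π.plain := rfl
        rw [this, Multiset.card_cons, Nat.even_add_one]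
        exact ho
      have hjq : jmin q.parts = mx π := by
        refine jmin_eq (Multiset.mem_cons_self _ _) ?_
        intro y hy
        rcases Multiset.mem_cons.mp hy with rfl | hy
        · exact le_rfl
        · exact hP y hy
      refine ⟨(true, ⟨q, hqe⟩), ?_⟩
      refine Subtype.ext (op_ext ?_ ?_)
      · show {jmin q.parts} = π.overl
        rw [hjq, hO]
      · show q.parts.erase (jmin q.parts) = π.plain
        rw [hjq]
        exact Multiset.erase_cons_head _ _
  have hcard := Nat.card_eq_of_bijective B ⟨hinj, hsurj⟩
  rw [← hcard, Nat.card_prod]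
  congr 1
  rw [Nat.card_eq_fintype_card]
  simp

end OPaux


theorem stmt_2 (n : ℕ) (hn : 1 ≤ n) :
    (Nat.card {π : Overpartition n // Even (lNltO π)} : ℤ) -
      Nat.card {π : Overpartition n // Odd (lNltO π)} =
    2 * Nat.card {p : n.Partition // Even (Multiset.card p.parts)} := by
  rw [OPaux.count_aux lNltO OPaux.phi OPaux.IsFix
    (fun a ha => OPaux.fix_phi ha)
    (fun a ha => (OPaux.moving ha).1)
    (fun a ha => (OPaux.moving ha).2.1)
    (fun a ha => (OPaux.moving ha).2.2)
    (fun a ha => OPaux.fix_even ha)]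
  rw [OPaux.final_count hn]
  push_cast
  ring
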